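/- Let Qₙ be the n×n matrix with entries 1 on and above the diagonal and 0 below. Then ‖Qₙ‖ = 1/(2 sin(π/(4n+2))). -/

import Mathlib

open Real Finset

private noncomputable def uu (θ : ℝ) (k : ℕ) : ℝ := Real.cos ((2 * k + 1) * θ)

private lemma uu_rec (θ : ℝ) (k : ℕ) :
    uu θ (k + 2) + uu θ k = 2 * Real.cos (2 * θ) * uu θ (k + 1) := by
  have hA : ((2 * ((k:ℝ) + 2) + 1)) * θ = (2 * k + 3) * θ + 2 * θ := by ring
  have hB : ((2 * (k:ℝ) + 1)) * θ = (2 * k + 3) * θ - 2 * θ := by ring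
  simp only [uu]
  push_cast
  rw [hA, hB, Real.cos_add, Real.cos_sub, show (2 * ((k:ℝ)+1) + 1) * θ = (2*k+3)*θ by ring]
  ring

private lemma uu_one (θ : ℝ) : uu θ 1 = (2 * Real.cos (2 * θ) - 1) * uu θ 0 := by
  simp only [uu]
  push_cast
  rw [show (2 * (1:ℝ) + 1) * θ = 3 * θ by ring, show (2 * (0:ℝ) + 1) * θ = θ by ring,
    Real.cos_three_mul, Real.cos_two_mul]
  ring

private lemma uu_theta_pos {n : ℕ} {θ : ℝ} (hθ : θ = π / (4 * n + 2)) : 0 < θ := by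
  rw [hθ]; positivity

private lemma uu_half {n : ℕ} {θ : ℝ} (hθ : θ = π / (4 * n + 2)) :
    (2 * (n:ℝ) + 1) * θ = π / 2 := by
  rw [hθ]
  have h : (4 * (n:ℝ) + 2) ≠ 0 := by positivity
  field_simp
  ring

private lemma uu_pos {n : ℕ} {θ : ℝ} (hθ : θ = π / (4 * n + 2)) {k : ℕ} (hk : k < n) :
    0 < uu θ k := by
  have hθ0 : 0 < θ := uu_theta_pos hθ
  apply Real.cos_pos_of_mem_Ioo
  constructor
  · have : 0 < (2 * (k:ℝ) + 1) * θ := by positivity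
    linarith [Real.pi_pos]
  · have hlt : (2 * (k:ℝ) + 1) < 2 * n + 1 := by
      have : (k:ℝ) < n := by exact_mod_cast hk
      linarith
    calc (2 * (k:ℝ) + 1) * θ < (2 * n + 1) * θ := by
          exact mul_lt_mul_of_pos_right hlt hθ0
      _ = π / 2 := uu_half hθ

private lemma uu_zero {n : ℕ} {θ : ℝ} (hθ : θ = π / (4 * n + 2)) : uu θ n = 0 := by
  have := uu_half hθ
  simp only [uu, this, Real.cos_pi_div_two]

private lemma claimB (θ : ℝ) (m : ℕ) :
    2 * Real.cos (2 * θ) * ∑ k ∈ range (m + 1), uu θ k ^ 2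
      = 2 * ∑ k ∈ range (m + 1), uu θ k * uu θ (k + 1) + uu θ 0 ^ 2
        - uu θ m * uu θ (m + 1) := by
  induction m with
  | zero =>
      rw [show (0:ℕ)+1 = 1 from rfl, sum_range_one, sum_range_one, uu_one θ]
      ring
  | succ m ih =>
      rw [sum_range_succ, sum_range_succ (f := fun k => uu θ k * uu θ (k + 1))]
      have hr : (uu θ (m + 2) + uu θ m) * uu θ (m + 1)
          = 2 * Real.cos (2 * θ) * uu θ (m + 1) * uu θ (m + 1) := by
        rw [uu_rec]
      linear_combination ih - hr

private lemma eq_sum {n : ℕ} (hn : 0 < n) {θ : ℝ} (hθ : θ = π / (4 * n + 2)) :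
    ∑ k ∈ range n, (uu θ k - uu θ (k + 1)) ^ 2
      = (2 - 2 * Real.cos (2 * θ)) * ∑ k ∈ range n, uu θ k ^ 2 := by
  obtain ⟨m, rfl⟩ := Nat.exists_eq_succ_of_ne_zero hn.ne'
  have hB := claimB θ m
  have hz : uu θ (m + 1) = 0 := uu_zero hθ
  rw [hz] at hB
  have hshift : ∑ k ∈ range (m + 1), uu θ (k + 1) ^ 2
      = ∑ k ∈ range (m + 1), uu θ k ^ 2 - uu θ 0 ^ 2 + uu θ (m + 1) ^ 2 := by
    have h1 := Finset.sum_range_succ' (fun k => uu θ k ^ 2) (m + 1)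
    have h2 := Finset.sum_range_succ (fun k => uu θ k ^ 2) (m + 1)
    linarith
  have hexp : ∑ k ∈ range (m + 1), (uu θ k - uu θ (k + 1)) ^ 2
      = ∑ k ∈ range (m + 1), uu θ k ^ 2 + ∑ k ∈ range (m + 1), uu θ (k + 1) ^ 2
        - 2 * ∑ k ∈ range (m + 1), uu θ k * uu θ (k + 1) := by
    have h3 : ∀ k ∈ range (m + 1), (uu θ k - uu θ (k + 1)) ^ 2
        = uu θ k ^ 2 + uu θ (k + 1) ^ 2 - 2 * (uu θ k * uu θ (k + 1)) :=
      fun k _ => by ring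
    rw [Finset.sum_congr rfl h3, Finset.sum_sub_distrib, Finset.sum_add_distrib,
      ← Finset.mul_sum]
  rw [hexp, hshift, hz]
  linarith

private lemma step_ineq (a b : ℂ) (β : ℝ) (h : 0 < β ∨ (β = 0 ∧ b = 0)) :
    (1 - β) * ‖a‖ ^ 2 + (1 - 1 / β) * ‖b‖ ^ 2 ≤ ‖a - b‖ ^ 2 := by
  rcases h with hβ | ⟨hβ, hb⟩
  · have h1 : |‖a‖ - ‖b‖| ≤ ‖a - b‖ := abs_norm_sub_norm_le a b
    have h2 : (‖a‖ - ‖b‖) ^ 2 ≤ ‖a - b‖ ^ 2 := by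
      rw [← sq_abs (‖a‖ - ‖b‖)]
      exact pow_le_pow_left₀ (abs_nonneg _) h1 2
    have key : (1 - β) * ‖a‖ ^ 2 + (1 - 1 / β) * ‖b‖ ^ 2
        = (‖a‖ - ‖b‖) ^ 2 - (β * ‖a‖ - ‖b‖) ^ 2 / β := by
      field_simp
      ring
    have h3 : 0 ≤ (β * ‖a‖ - ‖b‖) ^ 2 / β := by positivity
    linarith
  · subst hb hβ
    simp

private lemma key_ineq {n : ℕ} (hn : 0 < n) {θ : ℝ} (hθ : θ = π / (4 * n + 2))
    (z : ℕ → ℂ) (hz : ∀ k, n ≤ k → z k = 0) :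
    (2 - 2 * Real.cos (2 * θ)) * ∑ k ∈ range n, ‖z k‖ ^ 2
      ≤ ∑ k ∈ range n, ‖z k - z (k + 1)‖ ^ 2 := by
  set β : ℕ → ℝ := fun k => uu θ (k + 1) / uu θ k with hβ
  set g : ℕ → ℝ := fun k => if k = 0 then 0 else (1 - 1 / β (k - 1)) * ‖z k‖ ^ 2 with hg
  -- termwise bound
  have hterm : ∀ k ∈ range n,
      (1 - β k) * ‖z k‖ ^ 2 + (1 - 1 / β k) * ‖z (k + 1)‖ ^ 2
        ≤ ‖z k - z (k + 1)‖ ^ 2 := by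
    intro k hk
    rw [mem_range] at hk
    apply step_ineq
    rcases lt_or_ge (k + 1) n with h | h
    · left
      exact div_pos (uu_pos hθ h) (uu_pos hθ hk)
    · right
      have hkn : k + 1 = n := by omega
      constructor
      · simp only [hβ]
        rw [hkn, uu_zero hθ, zero_div]
      · exact hz _ (by omega)
  have hsum := Finset.sum_le_sum hterm
  -- reindex the second part
  have hre : ∑ k ∈ range n, (1 - 1 / β k) * ‖z (k + 1)‖ ^ 2 = ∑ k ∈ range n, g k := by
    have h1 := Finset.sum_range_succ' g n
    have h2 := Finset.sum_range_succ g n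
    have hgsucc : ∀ k, g (k + 1) = (1 - 1 / β k) * ‖z (k + 1)‖ ^ 2 := by
      intro k; simp [hg]
    have hgn : g n = 0 := by
      simp [hg, hz n le_rfl, hn.ne']
    have hg0 : g 0 = 0 := by simp [hg]
    simp only [hgsucc] at h1
    linarith
  -- coefficient identity
  have hcoef : ∀ k ∈ range n,
      (1 - β k) * ‖z k‖ ^ 2 + g k = (2 - 2 * Real.cos (2 * θ)) * ‖z k‖ ^ 2 := by
    intro k hk
    rw [mem_range] at hk
    match k with
    | 0 =>
        have h0 : uu θ 0 ≠ 0 := (uu_pos hθ hk).ne'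
        have hβ0 : β 0 = 2 * Real.cos (2 * θ) - 1 := by
          simp only [hβ]
          rw [uu_one θ]
          field_simp
        simp only [hg, if_pos rfl, hβ0]
        ring
    | (j + 1) =>
        have hj1 : uu θ (j + 1) ≠ 0 := (uu_pos hθ hk).ne'
        have hj0 : uu θ j ≠ 0 := (uu_pos hθ (by omega)).ne'
        have hrec := uu_rec θ j
        have hco : β (j + 1) + 1 / β j = 2 * Real.cos (2 * θ) := by
          simp only [hβ, one_div_div]
          field_simp
          linarith [hrec]
        simp only [hg, Nat.succ_ne_zero, if_false, Nat.add_sub_cancel]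
        nlinarith [hco, sq_nonneg ‖z (j+1)‖]
  have hfin : ∑ k ∈ range n, ((1 - β k) * ‖z k‖ ^ 2 + g k)
      = (2 - 2 * Real.cos (2 * θ)) * ∑ k ∈ range n, ‖z k‖ ^ 2 := by
    rw [Finset.sum_congr rfl hcoef, ← Finset.mul_sum]
  rw [Finset.sum_add_distrib] at hsum hfin
  linarith
private lemma T_apply {n : ℕ} (Q : Matrix (Fin n) (Fin n) ℂ)
    (hQ : Q = Matrix.of fun k ℓ : Fin n => if k ≤ ℓ then (1 : ℂ) else 0)
    (x : EuclideanSpace ℂ (Fin n)) (i : Fin n) :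
    (Matrix.toEuclideanCLM (𝕜 := ℂ) Q) x i
      = ∑ j ∈ Ico (i : ℕ) n, (if h : j < n then x ⟨j, h⟩ else 0) := by
  have h := Matrix.ofLp_toEuclideanCLM (𝕜 := ℂ) Q x
  have h1 : (Matrix.toEuclideanCLM (𝕜 := ℂ) Q) x i = ∑ j : Fin n, Q i j * x j := by
    simpa [Matrix.toLin'_apply, Matrix.mulVec, dotProduct] using congrFun h i
  rw [h1, hQ]
  have h2 : ∀ j : Fin n,
      (Matrix.of fun k ℓ : Fin n => if k ≤ ℓ then (1 : ℂ) else 0) i j * x j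
        = (fun k : ℕ => if (i : ℕ) ≤ k then (if h : k < n then x ⟨k, h⟩ else 0) else 0)
            (j : ℕ) := by
    intro j
    simp only [Matrix.of_apply, Fin.le_def, dif_pos j.isLt, Fin.eta]
    split_ifs <;> simp
  rw [Finset.sum_congr rfl fun j _ => h2 j,
    Fin.sum_univ_eq_sum_range
      (fun k : ℕ => if (i : ℕ) ≤ k then (if h : k < n then x ⟨k, h⟩ else 0) else 0) n,
    ← Finset.sum_filter]
  congr 1
  ext j
  simp only [Finset.mem_filter, Finset.mem_range, Finset.mem_Ico]
  tauto

noncomputable def opN {n : ℕ} (A : Matrix (Fin n) (Fin n) ℂ) : ℝ :=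
  ‖Matrix.toEuclideanCLM (𝕜 := ℂ) A‖

theorem stmt6 {n : ℕ} (hn : 0 < n)
    (Q : Matrix (Fin n) (Fin n) ℂ)
    (hQ : Q = Matrix.of fun k ℓ : Fin n => if k ≤ ℓ then (1 : ℂ) else 0) :
    opN Q = 1 / (2 * Real.sin (π / (4 * n + 2))) := by
  set θ : ℝ := π / (4 * (n : ℝ) + 2) with hθdef
  have hθpos : 0 < θ := uu_theta_pos hθdef
  have hθltpi : θ < π := by
    have h2 : (2 : ℝ) ≤ 4 * (n : ℝ) + 2 := by
      have : (0 : ℝ) ≤ (n : ℝ) := Nat.cast_nonneg n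
      linarith
    have h3 : θ ≤ π / 2 := by
      rw [hθdef, div_le_div_iff₀ (by linarith [Real.pi_pos]) (by norm_num : (0:ℝ) < 2)]
      nlinarith [Real.pi_pos]
    linarith [Real.pi_pos]
  have hsin : 0 < Real.sin θ := Real.sin_pos_of_pos_of_lt_pi hθpos hθltpi
  have hμ : 2 - 2 * Real.cos (2 * θ) = (2 * Real.sin θ) ^ 2 := by
    have h1 := Real.cos_two_mul θ
    have h2 := Real.sin_sq_add_cos_sq θ
    nlinarith [h1, h2]
  set T := Matrix.toEuclideanCLM (𝕜 := ℂ) Q with hT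
  have hnorm : ∀ v : EuclideanSpace ℂ (Fin n), ‖v‖ ^ 2 = ∑ i : Fin n, ‖v i‖ ^ 2 := by
    intro v
    rw [EuclideanSpace.norm_eq, Real.sq_sqrt (by positivity)]
  have hC : 0 < 1 / (2 * Real.sin θ) := by positivity
  show ‖T‖ = 1 / (2 * Real.sin θ)
  apply le_antisymm
  · apply ContinuousLinearMap.opNorm_le_bound _ hC.le
    intro x
    set z : ℕ → ℂ := fun k => ∑ j ∈ Ico k n, (if h : j < n then x ⟨j, h⟩ else 0) with hzdef
    have hz0 : ∀ k, n ≤ k → z k = 0 := by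
      intro k hk
      rw [hzdef]
      simp only
      rw [Finset.Ico_eq_empty (by omega), Finset.sum_empty]
    have hdiff : ∀ k, k < n → z k - z (k + 1)
        = (if h : k < n then x ⟨k, h⟩ else 0) := by
      intro k hk
      have e1 : z k = ∑ j ∈ range n, (if h : j < n then x ⟨j, h⟩ else 0)
          - ∑ j ∈ range k, (if h : j < n then x ⟨j, h⟩ else 0) :=
        Finset.sum_Ico_eq_sub _ (by omega)
      have e2 : z (k + 1) = ∑ j ∈ range n, (if h : j < n then x ⟨j, h⟩ else 0)
          - ∑ j ∈ range (k + 1), (if h : j < n then x ⟨j, h⟩ else 0) :=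
        Finset.sum_Ico_eq_sub _ (by omega)
      rw [e1, e2, Finset.sum_range_succ]
      ring
    have hTx : ∀ i : Fin n, T x i = z (i : ℕ) := fun i => T_apply Q hQ x i
    have hx : ‖x‖ ^ 2 = ∑ k ∈ range n, ‖z k - z (k + 1)‖ ^ 2 := by
      rw [hnorm, ← Fin.sum_univ_eq_sum_range (fun k => ‖z k - z (k + 1)‖ ^ 2) n]
      apply Finset.sum_congr rfl
      intro i _
      rw [hdiff (i : ℕ) i.isLt, dif_pos i.isLt, Fin.eta]
    have hy : ‖T x‖ ^ 2 = ∑ k ∈ range n, ‖z k‖ ^ 2 := by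
      rw [hnorm, ← Fin.sum_univ_eq_sum_range (fun k => ‖z k‖ ^ 2) n]
      exact Finset.sum_congr rfl fun i _ => by rw [hTx i]
    have hk := key_ineq hn hθdef z hz0
    have h4 : (2 * Real.sin θ) ^ 2 * ‖T x‖ ^ 2 ≤ ‖x‖ ^ 2 := by
      rw [hx, hy, ← hμ]
      exact hk
    have h5 : ‖T x‖ ^ 2 ≤ (1 / (2 * Real.sin θ) * ‖x‖) ^ 2 := by
      rw [mul_pow, div_pow, one_pow]
      rw [div_mul_eq_mul_div, le_div_iff₀ (by positivity), one_mul]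
      linarith
    exact le_of_pow_le_pow_left₀ two_ne_zero (by positivity) h5
  · set x : EuclideanSpace ℂ (Fin n) :=
      WithLp.toLp 2 (fun i : Fin n => (((uu θ i - uu θ (i + 1) : ℝ)) : ℂ)) with hxdef
    have hxapp : ∀ i : Fin n, x i = ((uu θ (i : ℕ) - uu θ ((i : ℕ) + 1) : ℝ) : ℂ) :=
      fun i => rfl
    have hTx : ∀ i : Fin n, T x i = ((uu θ (i : ℕ) : ℝ) : ℂ) := by
      intro i
      rw [T_apply Q hQ x i]
      have hc : ∀ j ∈ Ico (i : ℕ) n, (if h : j < n then x ⟨j, h⟩ else 0)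
          = ((uu θ j : ℝ) : ℂ) - ((uu θ (j + 1) : ℝ) : ℂ) := by
        intro j hj
        rw [mem_Ico] at hj
        rw [dif_pos hj.2, hxapp ⟨j, hj.2⟩]
        push_cast
        ring
      rw [Finset.sum_congr rfl hc,
        Finset.sum_Ico_eq_sub (fun j => ((uu θ j : ℝ) : ℂ) - ((uu θ (j + 1) : ℝ) : ℂ))
          (le_of_lt i.isLt),
        Finset.sum_range_sub' (fun j => ((uu θ j : ℝ) : ℂ)),
        Finset.sum_range_sub' (fun j => ((uu θ j : ℝ) : ℂ)),
        uu_zero hθdef]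
      push_cast
      ring
    set S := ∑ k ∈ range n, uu θ k ^ 2 with hS
    have hSpos : 0 < S := by
      have h1 : uu θ 0 ^ 2 ≤ S :=
        Finset.single_le_sum (f := fun k => uu θ k ^ 2) (fun k _ => sq_nonneg _)
          (mem_range.2 hn)
      have h2 : 0 < uu θ 0 := uu_pos hθdef hn
      nlinarith
    have hyn : ‖T x‖ ^ 2 = S := by
      rw [hnorm]
      have hc : ∀ i : Fin n, ‖T x i‖ ^ 2 = uu θ (i : ℕ) ^ 2 := by
        intro i
        rw [hTx i, Complex.norm_real, Real.norm_eq_abs, sq_abs]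
      rw [Finset.sum_congr rfl fun i _ => hc i,
        Fin.sum_univ_eq_sum_range (fun k => uu θ k ^ 2) n]
    have hxn : ‖x‖ ^ 2 = (2 - 2 * Real.cos (2 * θ)) * S := by
      rw [hnorm]
      have hc : ∀ i : Fin n, ‖x i‖ ^ 2 = (uu θ (i : ℕ) - uu θ ((i : ℕ) + 1)) ^ 2 := by
        intro i
        rw [hxapp i, Complex.norm_real, Real.norm_eq_abs, sq_abs]
      rw [Finset.sum_congr rfl fun i _ => hc i,
        Fin.sum_univ_eq_sum_range (fun k => (uu θ k - uu θ (k + 1)) ^ 2) n]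
      exact eq_sum hn hθdef
    have hle := T.le_opNorm x
    have hTnn : 0 ≤ ‖T‖ := norm_nonneg _
    have hxpos : 0 < ‖x‖ := by
      have h7 : 0 < (2 * Real.sin θ) ^ 2 * S := by positivity
      have h8 : ‖x‖ ^ 2 = (2 * Real.sin θ) ^ 2 * S := by rw [hxn, hμ]
      nlinarith [norm_nonneg x]
    have h5 : ‖T x‖ ^ 2 ≤ ‖T‖ ^ 2 * ‖x‖ ^ 2 := by
      nlinarith [hle, norm_nonneg (T x), norm_nonneg x, hTnn]
    rw [hyn, hxn, hμ] at h5
    clear hT hxdef hS hxapp hTx hle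
    clear_value T x S
    rcases le_or_gt (1 / (2 * Real.sin θ)) ‖T‖ with h | h
    · exact h
    · exfalso
      have hlt : 2 * Real.sin θ * ‖T‖ < 1 := by
        calc 2 * Real.sin θ * ‖T‖ < 2 * Real.sin θ * (1 / (2 * Real.sin θ)) :=
              mul_lt_mul_of_pos_left h (by positivity)
          _ = 1 := by field_simp
      have hnn : 0 ≤ 2 * Real.sin θ * ‖T‖ := by positivity
      have h9 : (2 * Real.sin θ * ‖T‖) ^ 2 < 1 := by nlinarith
      nlinarith [h5, hSpos, h9]
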